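/- Let x, y be complex numbers with x³ + 420·x − 5600 ≠ 0, and suppose y² = (x³ + 420·x − 5600)·(x³ + 42·x² + 1120). Define u = −882000·(x − 14)/(x³ + 420·x − 5600) and v = 49000·(x³ − 21·x² − 140)·y/(x³ + 420·x − 5600)². Then v² = u³ + 4900·u² + 7031500·u + 2401000000. That is, (u, v) lies on the elliptic curve v² = u³ + 4900u² + 7031500u + 2401000000 whenever (x, y) lies on the genus-two curve y² = (x³ + 420x − 5600)(x³ + 42x² + 1120). -/

import Mathlib

/-- The degree-3 morphism from the genus-two curve
`y² = (x³ + 420x − 5600)(x³ + 42x² + 1120)` to the elliptic curve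
`v² = u³ + 4900u² + 7031500u + 2401000000`. -/
theorem genus_two_to_elliptic (x y : ℂ) (hx : x ^ 3 + 420 * x - 5600 ≠ 0)
    (hxy : y ^ 2 = (x ^ 3 + 420 * x - 5600) * (x ^ 3 + 42 * x ^ 2 + 1120)) :
    let u : ℂ := -882000 * (x - 14) / (x ^ 3 + 420 * x - 5600)
    let v : ℂ := 49000 * (x ^ 3 - 21 * x ^ 2 - 140) * y / (x ^ 3 + 420 * x - 5600) ^ 2
    v ^ 2 = u ^ 3 + 4900 * u ^ 2 + 7031500 * u + 2401000000 := by
  intro u v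
  have h : v ^ 2 * (x ^ 3 + 420 * x - 5600) ^ 4 =
      (u ^ 3 + 4900 * u ^ 2 + 7031500 * u + 2401000000) * (x ^ 3 + 420 * x - 5600) ^ 4 := by
    show (49000 * (x ^ 3 - 21 * x ^ 2 - 140) * y / (x ^ 3 + 420 * x - 5600) ^ 2) ^ 2 *
        (x ^ 3 + 420 * x - 5600) ^ 4 = _
    simp only [u]
    have hx' : x * (x ^ 2 + 420) - 5600 ≠ 0 := by ring_nf at hx ⊢; exact hx
    field_simp [u]
    ring_nf
    rw [show y ^ 2 = (x ^ 3 + 420 * x - 5600) * (x ^ 3 + 42 * x ^ 2 + 1120) from hxy]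
    ring
  have h4 : (x ^ 3 + 420 * x - 5600) ^ 4 ≠ 0 := pow_ne_zero _ hx
  exact mul_right_cancel₀ h4 h
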